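/- arXiv:2011.08454 — 2 statements merged into one kernel-verified Lean document; each statement's English description precedes it below -/
import Mathlib

section
/- Let M̂^ν(k) be the MG symbol: with d(k) = |k|^2 k_3^2 + (k_2^2 + ν|k|^4)^2, set M̂^ν_1(k) = [k_2 k_3 |k|^2 − k_1 k_3 (k_2^2 + ν|k|^4)]/d(k), M̂^ν_2(k) = [−k_1 k_3 |k|^2 − k_2 k_3 (k_2^2 + ν|k|^4)]/d(k), M̂^ν_3(k) = [(k_1^2+k_2^2)(k_2^2+ν|k|^4)]/d(k). Then for every ν > 0 there exists a constant C_ν > 0 such that |M̂^ν(k)| ≤ C_ν |k|^{−2} for all nonzero k ∈ ℤ^3. That is, for positive ν the MG velocity operator is smoothing of degree two (condition (A3): the associated operators T^ν_{ij} with symbol bounded by |k|^{−1}|M̂^ν(k)| satisfy |T̂^ν_{ij}(k)| ≤ C_ν|k|^{−3}). -/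
noncomputable section

/-- `|k|²` for `k = (k₁,k₂,k₃) ∈ ℤ³`. -/
def normSq3 (k1 k2 k3 : ℤ) : ℝ := (k1 : ℝ) ^ 2 + (k2 : ℝ) ^ 2 + (k3 : ℝ) ^ 2

/-- Denominator `d(k) = |k|² k₃² + (k₂² + ν |k|⁴)²` of the MG symbol. -/
def mgD (ν : ℝ) (k1 k2 k3 : ℤ) : ℝ :=
  normSq3 k1 k2 k3 * (k3 : ℝ) ^ 2 + ((k2 : ℝ) ^ 2 + ν * (normSq3 k1 k2 k3) ^ 2) ^ 2

/-- First component of the MG symbol `M̂^ν(k)`. -/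
def mgM1 (ν : ℝ) (k1 k2 k3 : ℤ) : ℝ :=
  ((k2 : ℝ) * (k3 : ℝ) * normSq3 k1 k2 k3
      - (k1 : ℝ) * (k3 : ℝ) * ((k2 : ℝ) ^ 2 + ν * (normSq3 k1 k2 k3) ^ 2)) / mgD ν k1 k2 k3

/-- Second component of the MG symbol `M̂^ν(k)`. -/
def mgM2 (ν : ℝ) (k1 k2 k3 : ℤ) : ℝ :=
  (-(k1 : ℝ) * (k3 : ℝ) * normSq3 k1 k2 k3
      - (k2 : ℝ) * (k3 : ℝ) * ((k2 : ℝ) ^ 2 + ν * (normSq3 k1 k2 k3) ^ 2)) / mgD ν k1 k2 k3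

/-- Third component of the MG symbol `M̂^ν(k)`. -/
def mgM3 (ν : ℝ) (k1 k2 k3 : ℤ) : ℝ :=
  (((k1 : ℝ) ^ 2 + (k2 : ℝ) ^ 2) * ((k2 : ℝ) ^ 2 + ν * (normSq3 k1 k2 k3) ^ 2)) / mgD ν k1 k2 k3

set_option maxHeartbeats 1000000

private lemma mg_aux (ν x y z s a d : ℝ) (hν : 0 < ν) (hs1 : 1 ≤ s)
    (hseq : s = x ^ 2 + y ^ 2 + z ^ 2) (hadef : a = y ^ 2 + ν * s ^ 2)
    (hdeq : d = s * z ^ 2 + a ^ 2) :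
    Real.sqrt (((y * z * s - x * z * a) / d) ^ 2 + ((-x * z * s - y * z * a) / d) ^ 2
        + ((x ^ 2 + y ^ 2) * a / d) ^ 2) ≤ 4 / ν / s := by
  have hs0 : 0 < s := lt_of_lt_of_le one_pos hs1
  have hx : x ^ 2 ≤ s := by nlinarith [sq_nonneg y, sq_nonneg z]
  have hy : y ^ 2 ≤ s := by nlinarith [sq_nonneg x, sq_nonneg z]
  have hz : z ^ 2 ≤ s := by nlinarith [sq_nonneg x, sq_nonneg y]
  have ha : ν * s ^ 2 ≤ a := by nlinarith [sq_nonneg y]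
  have ha0 : 0 < a := lt_of_lt_of_le (by positivity) ha
  have hd1 : s * z ^ 2 ≤ d := by nlinarith [sq_nonneg a]
  have hd2 : a ^ 2 ≤ d := by nlinarith [sq_nonneg z, hs0.le, mul_nonneg hs0.le (sq_nonneg z)]
  have hd0 : 0 < d := lt_of_lt_of_le (by positivity) hd2
  have ha2 : ν ^ 2 * s ^ 4 ≤ a ^ 2 := by
    have h := mul_le_mul ha ha (by positivity) ha0.le
    nlinarith [h]
  have hdd : a ^ 2 * (s * z ^ 2) ≤ d ^ 2 := by
    have h := mul_le_mul hd2 hd1 (by positivity) hd0.le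
    nlinarith [h]
  have hdd' : a ^ 2 * a ^ 2 ≤ d ^ 2 := by nlinarith [hd2, sq_nonneg a, hd0.le]
  have hP1 : ν ^ 2 * s ^ 2 * (y ^ 2 * z ^ 2 * s ^ 2) ≤ d ^ 2 := by
    have h1 : ν ^ 2 * s ^ 2 * (y ^ 2 * z ^ 2 * s ^ 2) ≤ a ^ 2 * (s * z ^ 2) := by
      nlinarith [mul_le_mul_of_nonneg_right hy (by positivity : (0:ℝ) ≤ ν ^ 2 * s ^ 4 * z ^ 2),
        mul_le_mul_of_nonneg_right ha2 (mul_nonneg hs0.le (sq_nonneg z))]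
    linarith [hdd]
  have hP2 : ν ^ 2 * s ^ 2 * (x ^ 2 * z ^ 2 * a ^ 2) ≤ d ^ 2 := by
    have hxz : x ^ 2 * z ^ 2 ≤ s ^ 2 := by
      nlinarith [sq_nonneg x, sq_nonneg z, hs0.le]
    have h1 : ν ^ 2 * s ^ 2 * (x ^ 2 * z ^ 2 * a ^ 2) ≤ a ^ 2 * a ^ 2 := by
      nlinarith [mul_le_mul_of_nonneg_right hxz (by positivity : (0:ℝ) ≤ ν ^ 2 * a ^ 2),
        mul_le_mul_of_nonneg_right ha2 (sq_nonneg a)]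
    linarith [hdd']
  have hP1' : ν ^ 2 * s ^ 2 * (x ^ 2 * z ^ 2 * s ^ 2) ≤ d ^ 2 := by
    have h1 : ν ^ 2 * s ^ 2 * (x ^ 2 * z ^ 2 * s ^ 2) ≤ a ^ 2 * (s * z ^ 2) := by
      nlinarith [mul_le_mul_of_nonneg_right hx (by positivity : (0:ℝ) ≤ ν ^ 2 * s ^ 4 * z ^ 2),
        mul_le_mul_of_nonneg_right ha2 (mul_nonneg hs0.le (sq_nonneg z))]
    linarith [hdd]
  have hP2' : ν ^ 2 * s ^ 2 * (y ^ 2 * z ^ 2 * a ^ 2) ≤ d ^ 2 := by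
    have hyz : y ^ 2 * z ^ 2 ≤ s ^ 2 := by
      nlinarith [sq_nonneg y, sq_nonneg z, hs0.le]
    have h1 : ν ^ 2 * s ^ 2 * (y ^ 2 * z ^ 2 * a ^ 2) ≤ a ^ 2 * a ^ 2 := by
      nlinarith [mul_le_mul_of_nonneg_right hyz (by positivity : (0:ℝ) ≤ ν ^ 2 * a ^ 2),
        mul_le_mul_of_nonneg_right ha2 (sq_nonneg a)]
    linarith [hdd']
  have hP3 : ν ^ 2 * s ^ 2 * ((x ^ 2 + y ^ 2) ^ 2 * a ^ 2) ≤ d ^ 2 := by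
    have hxy : (x ^ 2 + y ^ 2) ^ 2 ≤ s ^ 2 := by
      nlinarith [sq_nonneg x, sq_nonneg y, sq_nonneg z, hs0.le]
    have h1 : ν ^ 2 * s ^ 2 * ((x ^ 2 + y ^ 2) ^ 2 * a ^ 2) ≤ a ^ 2 * a ^ 2 := by
      nlinarith [mul_le_mul_of_nonneg_right hxy (by positivity : (0:ℝ) ≤ ν ^ 2 * a ^ 2),
        mul_le_mul_of_nonneg_right ha2 (sq_nonneg a)]
    linarith [hdd']
  have hM1 : ((y * z * s - x * z * a) / d) ^ 2 ≤ 4 / (ν ^ 2 * s ^ 2) := by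
    rw [div_pow, div_le_div_iff₀ (by positivity) (by positivity)]
    nlinarith [sq_nonneg (y * z * s + x * z * a), hP1, hP2,
      mul_nonneg (mul_nonneg (sq_nonneg ν) (sq_nonneg s)) (sq_nonneg (y * z * s + x * z * a))]
  have hM2 : ((-x * z * s - y * z * a) / d) ^ 2 ≤ 4 / (ν ^ 2 * s ^ 2) := by
    rw [div_pow, div_le_div_iff₀ (by positivity) (by positivity)]
    nlinarith [sq_nonneg (-x * z * s + y * z * a), hP1', hP2',
      mul_nonneg (mul_nonneg (sq_nonneg ν) (sq_nonneg s)) (sq_nonneg (-x * z * s + y * z * a))]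
  have hM3 : ((x ^ 2 + y ^ 2) * a / d) ^ 2 ≤ 4 / (ν ^ 2 * s ^ 2) := by
    rw [div_pow, div_le_div_iff₀ (by positivity) (by positivity)]
    nlinarith [hP3]
  have hsq : (4 / ν / s) ^ 2 = 16 / (ν ^ 2 * s ^ 2) := by
    field_simp
    ring
  have hsum : ((y * z * s - x * z * a) / d) ^ 2 + ((-x * z * s - y * z * a) / d) ^ 2
      + ((x ^ 2 + y ^ 2) * a / d) ^ 2 ≤ (4 / ν / s) ^ 2 := by
    rw [hsq]
    have h16 : 4 / (ν ^ 2 * s ^ 2) + 4 / (ν ^ 2 * s ^ 2) + 4 / (ν ^ 2 * s ^ 2)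
        ≤ 16 / (ν ^ 2 * s ^ 2) := by
      rw [← add_div, ← add_div]
      gcongr
      norm_num
    linarith [hM1, hM2, hM3]
  calc Real.sqrt (((y * z * s - x * z * a) / d) ^ 2 + ((-x * z * s - y * z * a) / d) ^ 2
        + ((x ^ 2 + y ^ 2) * a / d) ^ 2)
      ≤ Real.sqrt ((4 / ν / s) ^ 2) := Real.sqrt_le_sqrt hsum
    _ = 4 / ν / s := Real.sqrt_sq (by positivity)


/-- Condition (A3) for the MG symbol: for every `ν > 0` there is `C_ν > 0` such that
`|M̂^ν(k)| ≤ C_ν |k|⁻²` for all nonzero `k ∈ ℤ³` (here `|k|⁻² = 1/|k|² = 1/normSq3 k`):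
for positive `ν` the MG velocity operator is smoothing of degree two. -/
theorem mg_symbol_smoothing_degree_two (ν : ℝ) (hν : 0 < ν) :
    ∃ C : ℝ, 0 < C ∧
      ∀ k1 k2 k3 : ℤ, ¬(k1 = 0 ∧ k2 = 0 ∧ k3 = 0) →
        Real.sqrt ((mgM1 ν k1 k2 k3) ^ 2 + (mgM2 ν k1 k2 k3) ^ 2 + (mgM3 ν k1 k2 k3) ^ 2)
          ≤ C / normSq3 k1 k2 k3 := by
  refine ⟨4 / ν, by positivity, ?_⟩
  intro k1 k2 k3 hk
  have hs1 : (1 : ℝ) ≤ normSq3 k1 k2 k3 := by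
    have hZ : (1 : ℤ) ≤ k1 ^ 2 + k2 ^ 2 + k3 ^ 2 := by
      rcases not_and_or.mp hk with h1 | h23
      · nlinarith [sq_nonneg k2, sq_nonneg k3, Int.one_le_abs h1, sq_abs k1,
          sq_nonneg (|k1| - 1)]
      rcases not_and_or.mp h23 with h2 | h3
      · nlinarith [sq_nonneg k1, sq_nonneg k3, Int.one_le_abs h2, sq_abs k2,
          sq_nonneg (|k2| - 1)]
      · nlinarith [sq_nonneg k1, sq_nonneg k2, Int.one_le_abs h3, sq_abs k3,
          sq_nonneg (|k3| - 1)]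
    have hR : (1:ℝ) ≤ (k1:ℝ) ^ 2 + (k2:ℝ) ^ 2 + (k3:ℝ) ^ 2 := by exact_mod_cast hZ
    simpa [normSq3] using hR
  have := mg_aux ν (k1:ℝ) (k2:ℝ) (k3:ℝ) (normSq3 k1 k2 k3)
    ((k2:ℝ) ^ 2 + ν * (normSq3 k1 k2 k3) ^ 2) (mgD ν k1 k2 k3) hν hs1 rfl rfl rfl
  simpa only [mgM1, mgM2, mgM3] using this
end
end

section
/- Let M̂^0 be the inviscid MG symbol: with d(k) = |k|^2 k_3^2 + k_2^4, set M̂^0_2(k) = [−k_1 k_3 |k|^2 − k_2 k_3 k_2^2]/d(k) for k ∈ ℤ^3 with d(k) ≠ 0. Then for every n ∈ ℤ, evaluating at k = (n, 0, 1) gives M̂^0_2(n,0,1) = −n. Consequently the symbol M̂^0 is unbounded: for every C > 0 there exists k ∈ ℤ^3 with d(k) ≠ 0 and |M̂^0(k)| > C, i.e. the inviscid MG velocity operator is a genuinely singular operator of order 1. -/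
noncomputable section

/-- The inviscid MG symbol is unbounded (a genuinely singular operator of order 1):
`M̂^0₂(n,0,1) = -n` for every `n ∈ ℤ`, and consequently for every `C > 0` there is a
`k ∈ ℤ³` with `d(k) ≠ 0` and `|M̂^0(k)| > C`. -/
theorem mg0_symbol_unbounded :
    (∀ n : ℤ, mgM2 0 n 0 1 = -(n : ℝ)) ∧
      ∀ C : ℝ, 0 < C →
        ∃ k1 k2 k3 : ℤ, mgD 0 k1 k2 k3 ≠ 0 ∧
          C < Real.sqrt ((mgM1 0 k1 k2 k3) ^ 2 + (mgM2 0 k1 k2 k3) ^ 2 + (mgM3 0 k1 k2 k3) ^ 2) := by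

  have key : ∀ n : ℤ, mgM2 0 n 0 1 = -(n : ℝ) := by
    intro n
    have h : ((n:ℝ)^2 + 1) ≠ 0 := by positivity
    simp only [mgM2, mgD, normSq3]
    push_cast
    field_simp
    ring
  refine ⟨key, fun C hC => ?_⟩
  obtain ⟨n, hn⟩ := exists_nat_gt C
  refine ⟨n, 0, 1, ?_, ?_⟩
  · simp only [mgD, normSq3]
    push_cast
    positivity
  · have h2 : mgM2 0 n 0 1 = -(n:ℝ) := key n
    have hle : C < Real.sqrt ((mgM2 0 n 0 1)^2) := by
      rw [h2, Real.sqrt_sq_eq_abs, abs_neg, abs_of_nonneg (by positivity : (0:ℝ) ≤ (n:ℝ))]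
      exact_mod_cast hn
    refine lt_of_lt_of_le hle (Real.sqrt_le_sqrt ?_)
    nlinarith [sq_nonneg (mgM1 0 n 0 1), sq_nonneg (mgM3 0 n 0 1)]
end
end
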